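/- For all n ≥ 1, the number of assignments of n drivers to n spaces such that at least n-1 drivers fail to park equals 1, and the number such that all n drivers fail to park equals 0. -/

import Mathlib

open Finset

/-- One step of the linear parking process: the driver with choice `c` takes the
first free space with index at least `c`, if any; otherwise the failure count increases. -/
def parkStep {n : ℕ} (p : Finset (Fin n) × ℕ) (c : Fin n) : Finset (Fin n) × ℕ :=
  if h : ((Finset.univ \ p.1).filter (fun x => c ≤ x)).Nonempty then
    (insert (((Finset.univ \ p.1).filter (fun x => c ≤ x)).min' h) p.1, p.2)
  else
    (p.1, p.2 + 1)

/-- The set of occupied spaces and the number of drivers who fail to park,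
when drivers `0, 1, ..., m-1` with choices `f 0, f 1, ..., f (m-1)` arrive in order. -/
def parkRun {n m : ℕ} (f : Fin m → Fin n) : Finset (Fin n) × ℕ :=
  (List.ofFn f).foldl parkStep (∅, 0)

/-- The defect of an assignment: the number of drivers who fail to park. -/
def defect {n m : ℕ} (f : Fin m → Fin n) : ℕ := (parkRun f).2

/-- `cp n m k` is the number of assignments of `m` drivers to `n` spaces
under which exactly `k` drivers fail to park. -/
def cp (n m k : ℕ) : ℕ :=
  (Finset.univ.filter (fun f : Fin m → Fin n => defect f = k)).card
/-- For `n ≥ 1`, exactly one assignment of `n` drivers to `n` spaces makes at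
least `n - 1` drivers fail to park, and no assignment makes all `n` drivers fail. -/

lemma parkStep_pos {n : ℕ} (s : Finset (Fin n)) (k : ℕ) (c : Fin n)
    (h : ((Finset.univ \ s).filter (fun x => c ≤ x)).Nonempty) :
    parkStep (s, k) c = (insert (((Finset.univ \ s).filter (fun x => c ≤ x)).min' h) s, k) := by
  simp only [parkStep]; rw [dif_pos h]

lemma parkStep_neg {n : ℕ} (s : Finset (Fin n)) (k : ℕ) (c : Fin n)
    (h : ¬ ((Finset.univ \ s).filter (fun x => c ≤ x)).Nonempty) :
    parkStep (s, k) c = (s, k + 1) := by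
  simp only [parkStep]; rw [dif_neg h]

lemma min'_not_mem {n : ℕ} (s : Finset (Fin n)) (c : Fin n)
    (h : ((Finset.univ \ s).filter (fun x => c ≤ x)).Nonempty) :
    (((Finset.univ \ s).filter (fun x => c ≤ x)).min' h) ∉ s := by
  have := Finset.min'_mem _ h
  simp only [Finset.mem_filter, Finset.mem_sdiff] at this
  exact this.1.2

lemma card_foldl_le {n : ℕ} (l : List (Fin n)) (s : Finset (Fin n)) (k : ℕ) :
    s.card ≤ (l.foldl parkStep (s, k)).1.card := by
  induction l generalizing s k with
  | nil => simp
  | cons c l ih =>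
    rw [List.foldl_cons]
    by_cases h : ((Finset.univ \ s).filter (fun x => c ≤ x)).Nonempty
    · rw [parkStep_pos s k c h]
      exact le_trans (Finset.card_le_card (Finset.subset_insert _ _)) (ih _ _)
    · rw [parkStep_neg s k c h]
      exact ih _ _

lemma foldl_card_add {n : ℕ} (l : List (Fin n)) (s : Finset (Fin n)) (k : ℕ) :
    (l.foldl parkStep (s, k)).1.card + (l.foldl parkStep (s, k)).2 = s.card + k + l.length := by
  induction l generalizing s k with
  | nil => simp
  | cons c l ih =>
    rw [List.foldl_cons, List.length_cons]
    by_cases h : ((Finset.univ \ s).filter (fun x => c ≤ x)).Nonempty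
    · rw [parkStep_pos s k c h, ih, Finset.card_insert_of_notMem (min'_not_mem s c h)]
      ring
    · rw [parkStep_neg s k c h, ih]
      ring

/-- If at most one car is ever parked starting from a one-car state,
then every subsequent choice is the last spot and the occupied spot is the last. -/
lemma all_last {n : ℕ} (l : List (Fin (n + 1))) (s : Finset (Fin (n + 1))) (k : ℕ)
    (hs : s.card = 1) (hle : (l.foldl parkStep (s, k)).1.card ≤ 1) :
    (∀ c ∈ l, c = Fin.last n) ∧ (l ≠ [] → s = {Fin.last n}) := by
  induction l generalizing s k with
  | nil => simp
  | cons c l ih =>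
    rw [List.foldl_cons] at hle
    by_cases h : ((Finset.univ \ s).filter (fun x => c ≤ x)).Nonempty
    · exfalso
      rw [parkStep_pos s k c h] at hle
      have h2 : (insert (((Finset.univ \ s).filter (fun x => c ≤ x)).min' h) s).card = 2 := by
        rw [Finset.card_insert_of_notMem (min'_not_mem s c h), hs]
      have h3 := card_foldl_le l (insert (((Finset.univ \ s).filter (fun x => c ≤ x)).min' h) s) k
      omega
    · -- failure: the interval [c, last] is inside s, which is a singleton
      have hsub : ∀ x : Fin (n + 1), c ≤ x → x ∈ s := by
        intro x hx
        by_contra hxs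
        exact h ⟨x, by simp [Finset.mem_filter, Finset.mem_sdiff, hxs, hx]⟩
      have hlast : Fin.last n ∈ s := hsub _ (Fin.le_last c)
      have hc : c ∈ s := hsub c le_rfl
      obtain ⟨a, ha⟩ := Finset.card_eq_one.mp hs
      rw [ha, Finset.mem_singleton] at hlast hc
      have hcl : c = Fin.last n := hc.trans hlast.symm
      rw [parkStep_neg s k c h] at hle
      obtain ⟨ih1, _⟩ := ih s (k + 1) hs hle
      refine ⟨?_, fun _ => ?_⟩
      · intro d hd
        rcases List.mem_cons.mp hd with rfl | hd
        · exact hcl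
        · exact ih1 d hd
      · rw [ha, hlast]

/-- Folding the constant `last` choice from the singleton `last` state just fails each time. -/
lemma foldl_replicate_last {n : ℕ} (m k : ℕ) :
    (List.replicate m (Fin.last n)).foldl parkStep ({Fin.last n}, k) = ({Fin.last n}, k + m) := by
  induction m generalizing k with
  | zero => simp
  | succ m ih =>
    rw [List.replicate_succ, List.foldl_cons]
    have h : ¬ ((Finset.univ \ ({Fin.last n} : Finset (Fin (n+1)))).filter
        (fun x => Fin.last n ≤ x)).Nonempty := by
      rintro ⟨x, hx⟩
      simp only [Finset.mem_filter, Finset.mem_sdiff, Finset.mem_singleton] at hx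
      exact hx.1.2 (Fin.last_le_iff.mp hx.2)
    rw [parkStep_neg _ _ _ h, ih]
    ring_nf

/-- The first car always parks at its chosen spot. -/
lemma parkStep_empty {n : ℕ} (c : Fin n) :
    parkStep ((∅ : Finset (Fin n)), 0) c = ({c}, 0) := by
  have h : ((Finset.univ \ (∅ : Finset (Fin n))).filter (fun x => c ≤ x)).Nonempty :=
    ⟨c, by simp⟩
  rw [parkStep_pos _ _ _ h]
  congr 1
  have hmem := Finset.min'_mem _ h
  simp only [Finset.mem_filter, Finset.mem_sdiff] at hmem
  have h1 : ((Finset.univ \ (∅:Finset (Fin n))).filter (fun x => c ≤ x)).min' h = c :=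
    le_antisymm (Finset.min'_le _ c (by simp)) hmem.2
  rw [h1]
  simp

lemma defect_const_last (n : ℕ) : defect (fun _ : Fin (n + 1) => Fin.last n) = n := by
  unfold defect parkRun
  rw [List.ofFn_const, List.replicate_succ, List.foldl_cons, parkStep_empty,
    foldl_replicate_last]
  simp

lemma eq_const_last {n : ℕ} (f : Fin (n + 1) → Fin (n + 1)) (hf : n ≤ defect f) :
    f = fun _ => Fin.last n := by
  have hsum := foldl_card_add (List.ofFn f) ∅ 0
  have hlen : (List.ofFn f).length = n + 1 := by simp
  have hdef : defect f = ((List.ofFn f).foldl parkStep (∅, 0)).2 := rfl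
  have hcard : ((List.ofFn f).foldl parkStep (∅, 0)).1.card ≤ 1 := by
    simp only [Finset.card_empty, hlen] at hsum
    omega
  have hdec : List.ofFn f = f 0 :: List.ofFn (fun i : Fin n => f i.succ) := by
    rw [List.ofFn_succ]
  rw [hdec, List.foldl_cons, parkStep_empty] at hcard
  obtain ⟨h3, h4⟩ := all_last _ {f 0} 0 (Finset.card_singleton _) hcard
  funext i
  refine Fin.cases ?_ ?_ i
  · rcases Nat.eq_zero_or_pos n with rfl | hn0
    · exact Subsingleton.elim (α := Fin 1) _ _
    · have hne : List.ofFn (fun i : Fin n => f i.succ) ≠ [] := by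
        intro h
        have := congrArg List.length h
        simp at this
        omega
      exact Finset.singleton_injective (h4 hne)
  · intro j
    exact h3 _ (by rw [List.mem_ofFn]; exact ⟨j, rfl⟩)

theorem stmt14 (n : ℕ) (hn : 1 ≤ n) :
    (Finset.univ.filter (fun f : Fin n → Fin n => n - 1 ≤ defect f)).card = 1 ∧
      (Finset.univ.filter (fun f : Fin n → Fin n => defect f = n)).card = 0 := by
  obtain ⟨m, rfl⟩ : ∃ m, n = m + 1 := ⟨n - 1, by omega⟩
  constructor
  · have hset : (Finset.univ.filter
        (fun f : Fin (m + 1) → Fin (m + 1) => (m + 1) - 1 ≤ defect f)) =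
        {fun _ => Fin.last m} := by
      ext f
      simp only [Finset.mem_filter, Finset.mem_univ, true_and, Finset.mem_singleton]
      constructor
      · intro h
        exact eq_const_last f (by omega)
      · rintro rfl
        rw [defect_const_last]
        omega
    rw [hset, Finset.card_singleton]
  · rw [Finset.card_eq_zero, Finset.eq_empty_iff_forall_notMem]
    intro f hf
    simp only [Finset.mem_filter, Finset.mem_univ, true_and] at hf
    have := eq_const_last f (by omega)
    rw [this, defect_const_last] at hf
    omega
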